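/- Restriction of the left-interval module: for a left interval [i,0]◁ = {z ∈ B : 0 ≤ z ≤ i} (with i ∈ {0,...,n−1}), R(k[i,0]◁) ≅ ⊕_{k∈ℤ} k(kN, kN+i+1)_ZZ, where (a,b)_ZZ = {(c,d) ∈ ZZ : c > a, d < b} and N = n+m−1. -/

import Mathlib

open CategoryTheory CategoryTheory.Limits

def ZZ : Type := {p : ℤᵒᵈ × ℤ // OrderDual.ofDual p.1 = p.2 ∨ OrderDual.ofDual p.1 = p.2 + 1}

noncomputable instance : PartialOrder ZZ := Subtype.partialOrder _

def ZZ.a (p : ZZ) : ℤ := OrderDual.ofDual p.1.1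
def ZZ.b (p : ZZ) : ℤ := p.1.2

def Bipath (n m : ℕ) : Type := {z : ℕ // z < n + m}

def bipathLE (n : ℕ) (x y : ℕ) : Prop :=
  x = y ∨ (0 < n ∧ ((x ≤ y ∧ y ≤ n) ∨ (n ≤ y ∧ y ≤ x) ∨ x = 0 ∨ y = n))

lemma bipathLE_refl (n x : ℕ) : bipathLE n x x := by unfold bipathLE; omega

lemma bipathLE_trans {n x y z : ℕ} (h1 : bipathLE n x y) (h2 : bipathLE n y z) :
    bipathLE n x z := by unfold bipathLE at *; omega

lemma bipathLE_antisymm {n x y : ℕ} (h1 : bipathLE n x y) (h2 : bipathLE n y x) :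
    x = y := by unfold bipathLE at *; omega

instance (n m : ℕ) : PartialOrder (Bipath n m) where
  le x y := bipathLE n x.1 y.1
  le_refl x := bipathLE_refl n x.1
  le_trans _ _ _ h1 h2 := bipathLE_trans h1 h2
  le_antisymm _ _ h1 h2 := Subtype.ext (bipathLE_antisymm h1 h2)

def zetaFun (n m : ℕ) (a b : ℤ) : ℕ :=
  if b % ((n : ℤ) + m - 1) = 0 then (if a = b then n + m - 1 else 0)
  else if a = b then (b % ((n : ℤ) + m - 1)).toNat
  else if b % ((n : ℤ) + m - 1) ≤ (n : ℤ) - 1 then (b % ((n : ℤ) + m - 1)).toNat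
  else (b % ((n : ℤ) + m - 1)).toNat + 1

lemma zetaFun_lt (n m : ℕ) (hn : 1 < n) (hm : 1 < m) (a b : ℤ) :
    zetaFun n m a b < n + m := by
  unfold zetaFun
  have hN : (0:ℤ) < (n : ℤ) + m - 1 := by omega
  have h1 := Int.emod_nonneg b (by omega : ((n:ℤ) + m - 1) ≠ 0)
  have h2 := Int.emod_lt_of_pos b hN
  split_ifs <;> omega

def zeta (n m : ℕ) (hn : 1 < n) (hm : 1 < m) (p : ZZ) : Bipath n m :=
  ⟨zetaFun n m p.a p.b, zetaFun_lt n m hn hm _ _⟩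
open CategoryTheory CategoryTheory.Limits
open scoped Classical

section IntervalModule
variable (k : Type) [Field k] {P : Type} [Preorder P]

/-- Convexity of a subset of a poset. -/
def IsConvexIn (I : Set P) : Prop :=
  ∀ ⦃p z q : P⦄, p ∈ I → q ∈ I → p ≤ z → z ≤ q → z ∈ I

/-- Connectedness of a subset of a poset: any two points are joined by a
zigzag of comparabilities inside the subset. -/
def IsConnectedIn (I : Set P) : Prop :=
  ∀ x ∈ I, ∀ y ∈ I,
    Relation.ReflTransGen (fun a b => a ∈ I ∧ b ∈ I ∧ (a ≤ b ∨ b ≤ a)) x y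

/-- An interval of a poset: a nonempty convex connected subset. -/
structure IsIntervalIn (I : Set P) : Prop where
  nonempty : I.Nonempty
  convex : IsConvexIn I
  connected : IsConnectedIn I

/-- The fiber of the interval module at a point: `k` if `p ∈ I`, `0` otherwise. -/
def intervalFiber (I : Set P) (p : P) : Submodule k k where
  carrier := {x : k | p ∉ I → x = 0}
  add_mem' := by intro a b ha hb h; rw [ha h, hb h, add_zero]
  zero_mem' := fun _ => rfl
  smul_mem' := by intro c x hx h; rw [smul_eq_mul, hx h, mul_zero]

/-- Internal maps of the interval module. -/
noncomputable def intervalMap (I : Set P) (p q : P) :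
    intervalFiber k I p →ₗ[k] intervalFiber k I q where
  toFun x := ⟨if q ∈ I then x.1 else 0, fun hq => if_neg hq⟩
  map_add' x y := by apply Subtype.ext; by_cases hq : q ∈ I <;> simp [hq]
  map_smul' c x := by apply Subtype.ext; by_cases hq : q ∈ I <;> simp [hq]

/-- The interval module `kI` supported on a convex subset `I`:
it is `k` on `I` with identity internal maps, and `0` elsewhere. -/
noncomputable def intervalModule (I : Set P) (hI : IsConvexIn I) : P ⥤ ModuleCat k where
  obj p := ModuleCat.of k (intervalFiber k I p)
  map {p q} _ := ModuleCat.ofHom (intervalMap k I p q)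
  map_id p := by
    ext x
    show (if p ∈ I then x.1 else 0) = x.1
    by_cases hp : p ∈ I
    · simp [hp]
    · simp [hp, x.2 hp]
  map_comp {p q r} f g := by
    ext x
    show (if r ∈ I then x.1 else 0) = (if r ∈ I then (if q ∈ I then x.1 else 0) else 0)
    by_cases hr : r ∈ I
    · by_cases hq : q ∈ I
      · simp [hr, hq]
      · have hp : p ∉ I := fun hp => hq (hI hp hr f.le g.le)
        simp [hr, hq, x.2 hp]
    · simp [hr]

end IntervalModule

/-- The restriction functor along a monotone map, by precomposition. -/
noncomputable def restrictAlong (k : Type) [Field k] {P Q : Type} [Preorder P] [Preorder Q]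
    {f : P → Q} (hf : Monotone f) : (Q ⥤ ModuleCat k) ⥤ (P ⥤ ModuleCat k) :=
  (Functor.whiskeringLeft _ _ _).obj hf.functor


lemma ZZ.le_iff {p q : ZZ} : p ≤ q ↔ q.a ≤ p.a ∧ p.b ≤ q.b := Iff.rfl

/-- Translation of a zigzag point by `z * N` in both coordinates. -/
def ZZ.translate (N z : ℤ) (p : ZZ) : ZZ :=
  ⟨(OrderDual.toDual (p.a + z * N), p.b + z * N), by
    rcases p.2 with h | h
    · left; show p.a + z * N = p.b + z * N; unfold ZZ.a ZZ.b at *; omega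
    · right; show p.a + z * N = p.b + z * N + 1; unfold ZZ.a ZZ.b at *; omega⟩

/-- The interval `[a,b]_ZZ = {(c,d) ∈ ZZ : c ≤ b, d ≥ a}`. -/
def zzIcc (a b : ℤ) : Set ZZ := {p | p.a ≤ b ∧ a ≤ p.b}
/-- The interval `[a,b)_ZZ = {(c,d) ∈ ZZ : a ≤ d < b}`. -/
def zzIco (a b : ℤ) : Set ZZ := {p | a ≤ p.b ∧ p.b < b}
/-- The interval `(a,b]_ZZ = {(c,d) ∈ ZZ : a < c ≤ b}`. -/
def zzIoc (a b : ℤ) : Set ZZ := {p | a < p.a ∧ p.a ≤ b}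
/-- The interval `(a,b)_ZZ = {(c,d) ∈ ZZ : c > a, d < b}`. -/
def zzIoo (a b : ℤ) : Set ZZ := {p | a < p.a ∧ p.b < b}

lemma zzIcc_convex (a b : ℤ) : IsConvexIn (zzIcc a b) := by
  intro p z q hp hq hpz hzq
  exact ⟨le_trans (ZZ.le_iff.1 hpz).1 hp.1, le_trans hp.2 (ZZ.le_iff.1 hpz).2⟩

lemma zzIco_convex (a b : ℤ) : IsConvexIn (zzIco a b) := by
  intro p z q hp hq hpz hzq
  exact ⟨le_trans hp.1 (ZZ.le_iff.1 hpz).2, lt_of_le_of_lt (ZZ.le_iff.1 hzq).2 hq.2⟩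

lemma zzIoc_convex (a b : ℤ) : IsConvexIn (zzIoc a b) := by
  intro p z q hp hq hpz hzq
  exact ⟨lt_of_lt_of_le hq.1 (ZZ.le_iff.1 hzq).1, le_trans (ZZ.le_iff.1 hpz).1 hp.2⟩

lemma zzIoo_convex (a b : ℤ) : IsConvexIn (zzIoo a b) := by
  intro p z q hp hq hpz hzq
  exact ⟨lt_of_lt_of_le hq.1 (ZZ.le_iff.1 hzq).1, lt_of_le_of_lt (ZZ.le_iff.1 hzq).2 hq.2⟩

section ConvexLemmas
variable {P : Type} [Preorder P]

lemma isConvex_univ : IsConvexIn (Set.univ : Set P) := fun _ _ _ _ _ _ _ => trivial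

lemma isConvex_lower2 (a b : P) : IsConvexIn {z : P | z ≤ a ∨ z ≤ b} := by
  intro p z q hp hq hpz hzq
  rcases hq with h | h
  · exact Or.inl (le_trans hzq h)
  · exact Or.inr (le_trans hzq h)

lemma isConvex_upper2 (a b : P) : IsConvexIn {z : P | a ≤ z ∨ b ≤ z} := by
  intro p z q hp hq hpz hzq
  rcases hp with h | h
  · exact Or.inl (le_trans h hpz)
  · exact Or.inr (le_trans h hpz)

lemma isConvex_Icc (a b : P) : IsConvexIn {z : P | a ≤ z ∧ z ≤ b} :=
  fun _ _ _ hp hq hpz hzq => ⟨le_trans hp.1 hpz, le_trans hzq hq.2⟩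

end ConvexLemmas

lemma isConvex_lower {P : Type} [Preorder P] (a : P) : IsConvexIn {z : P | z ≤ a} :=
  fun _ _ _ _ hq hpz hzq => le_trans hzq hq


namespace RestAux

open CategoryTheory CategoryTheory.Limits

lemma ZZ.cases (p : ZZ) : p.a = p.b ∨ p.a = p.b + 1 := p.2

lemma bipathLE_le_of_small {n x i : ℕ} (hn : 0 < n) (hi : i ≤ n - 1) :
    bipathLE n x i ↔ x ≤ i := by unfold bipathLE; omega

lemma le_of_mul_lt {z w N : ℤ} (hN : 0 < N) (h : z * N < w * N + N) : z ≤ w := by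
  have h2 : z * N < (w + 1) * N := by rw [add_mul, one_mul]; exact h
  have := lt_of_mul_lt_mul_right h2 hN.le
  omega

lemma mem_zzIoo {a b : ℤ} {p : ZZ} : p ∈ zzIoo a b ↔ a < p.a ∧ p.b < b := Iff.rfl

lemma zeta_le_iff (n m : ℕ) (hn : 1 < n) (hm : 1 < m) (i : Bipath n m) (hi : i.1 ≤ n - 1)
    (p : ZZ) :
    zeta n m hn hm p ≤ i ↔
      ∃ z : ℤ, z * ((n:ℤ)+m-1) < p.a ∧ p.b < z * ((n:ℤ)+m-1) + i.1 + 1 := by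
  have h0 : zeta n m hn hm p ≤ i ↔ bipathLE n (zetaFun n m p.a p.b) i.1 := Iff.rfl
  rw [h0, bipathLE_le_of_small (by omega) hi]
  have hab := ZZ.cases p
  unfold zetaFun
  set N : ℤ := (n:ℤ)+m-1 with hNdef
  have hN : (0:ℤ) < N := by omega
  have hdm := Int.mul_ediv_add_emod p.b N
  have hr0 : 0 ≤ p.b % N := Int.emod_nonneg _ (by omega)
  have hr1 : p.b % N < N := Int.emod_lt_of_pos _ hN
  obtain ⟨q, hq⟩ : ∃ q, p.b / N = q := ⟨_, rfl⟩
  rw [hq] at hdm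
  obtain ⟨r, hr⟩ : ∃ r, p.b % N = r := ⟨_, rfl⟩
  rw [hr] at hdm hr0 hr1 ⊢
  obtain ⟨t, ht⟩ : ∃ t, q * N = t := ⟨_, rfl⟩
  have hdm2 : t + r = p.b := by rw [← ht, mul_comm]; exact hdm
  have hiN : (i.1:ℤ) + 1 ≤ N := by omega
  have hpa : p.a ≤ p.b + 1 := by rcases hab with h|h <;> omega
  have hzq : ∀ z : ℤ, z * N < p.a → p.b < z * N + i.1 + 1 → z * N = t := by
    intro z h1 h2
    have e1 : z ≤ q := le_of_mul_lt hN (by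
      have : z * N < q * N + N := by rw [ht]; linarith
      linarith)
    have e2 : q ≤ z := le_of_mul_lt hN (by
      have : q * N < z * N + N := by rw [ht]; linarith
      linarith)
    have : z = q := le_antisymm e1 e2
    rw [this, ht]
  constructor
  · intro hx
    refine ⟨q, ?_, ?_⟩ <;> rw [ht] <;> split_ifs at hx <;> omega
  · rintro ⟨z, hz1, hz2⟩
    have hzt := hzq z hz1 hz2
    rw [hzt] at hz1 hz2
    split_ifs <;> omega

lemma mem_unique (n m : ℕ) (hn : 1 < n) (hm : 1 < m) (i : Bipath n m) (hi : i.1 ≤ n - 1)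
    {p : ZZ} {z w : ℤ}
    (h1 : p ∈ zzIoo (z * ((n:ℤ)+m-1)) (z * ((n:ℤ)+m-1) + i.1 + 1))
    (h2 : p ∈ zzIoo (w * ((n:ℤ)+m-1)) (w * ((n:ℤ)+m-1) + i.1 + 1)) : z = w := by
  obtain ⟨ha1, hb1⟩ := mem_zzIoo.1 h1
  obtain ⟨ha2, hb2⟩ := mem_zzIoo.1 h2
  have hN : (0:ℤ) < (n:ℤ)+m-1 := by omega
  have hiN : (i.1:ℤ) + 1 ≤ (n:ℤ)+m-1 := by omega
  have hpa : p.a ≤ p.b + 1 := by rcases ZZ.cases p with h|h <;> omega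
  have e1 : z ≤ w := le_of_mul_lt hN (by linarith)
  have e2 : w ≤ z := le_of_mul_lt hN (by linarith)
  omega

lemma mem_step (n m : ℕ) (hn : 1 < n) (hm : 1 < m) (i : Bipath n m) (hi : i.1 ≤ n - 1)
    {p q : ZZ} {z : ℤ} (hpq : p ≤ q)
    (hp : p ∈ zzIoo (z * ((n:ℤ)+m-1)) (z * ((n:ℤ)+m-1) + i.1 + 1))
    (hq : zeta n m hn hm q ≤ i) :
    q ∈ zzIoo (z * ((n:ℤ)+m-1)) (z * ((n:ℤ)+m-1) + i.1 + 1) := by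
  obtain ⟨w, hw1, hw2⟩ := (zeta_le_iff n m hn hm i hi q).1 hq
  obtain ⟨hle1, hle2⟩ := (ZZ.le_iff).1 hpq
  obtain ⟨hp1, hp2⟩ := mem_zzIoo.1 hp
  have hN : (0:ℤ) < (n:ℤ)+m-1 := by omega
  have hiN : (i.1:ℤ) + 1 ≤ (n:ℤ)+m-1 := by omega
  have hpa : p.a ≤ p.b + 1 := by rcases ZZ.cases p with h|h <;> omega
  have e1 : z ≤ w := le_of_mul_lt hN (by linarith)
  have e2 : w ≤ z := le_of_mul_lt hN (by linarith)
  have hwz : w = z := by omega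
  rw [hwz] at hw1 hw2
  exact mem_zzIoo.2 ⟨hw1, hw2⟩

section Main

variable (n m : ℕ) (hn : 1 < n) (hm : 1 < m) (k : Type) [Field k]
  (hz : Monotone (zeta n m hn hm)) (i : Bipath n m) (hi : i.1 ≤ n - 1)

abbrev Iz (z : ℤ) : Set ZZ := zzIoo (z * ((n:ℤ)+m-1)) (z * ((n:ℤ)+m-1) + i.1 + 1)

noncomputable abbrev Fz (z : ℤ) : ZZ ⥤ ModuleCat k :=
  intervalModule k (Iz n m i z) (zzIoo_convex _ _)

noncomputable abbrev G : ZZ ⥤ ModuleCat k :=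
  (restrictAlong k hz).obj (intervalModule k {z | z ≤ i} (isConvex_lower i))

lemma mem_imp (hi : i.1 ≤ n - 1) (z : ℤ) {p : ZZ} (hp : p ∈ Iz n m i z) :
    zeta n m hn hm p ∈ {w : Bipath n m | w ≤ i} :=
  (zeta_le_iff n m hn hm i hi p).2 ⟨z, (mem_zzIoo.1 hp).1, (mem_zzIoo.1 hp).2⟩

/-- Inclusion of the fiber of the summand into the fiber of the restricted module. -/
noncomputable def inclMap (hi : i.1 ≤ n - 1) (z : ℤ) (p : ZZ) :
    intervalFiber k (Iz n m i z) p →ₗ[k]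
      intervalFiber k {w : Bipath n m | w ≤ i} (zeta n m hn hm p) where
  toFun x := ⟨x.1, fun h => x.2 (fun hp => h (mem_imp n m hn hm i hi z hp))⟩
  map_add' _ _ := rfl
  map_smul' _ _ := rfl

/-- Projection back, when `p` belongs to the interval. -/
noncomputable def backMap (z : ℤ) (p : ZZ) (hmem : p ∈ Iz n m i z) :
    intervalFiber k {w : Bipath n m | w ≤ i} (zeta n m hn hm p) →ₗ[k]
      intervalFiber k (Iz n m i z) p where
  toFun x := ⟨x.1, fun h => absurd hmem h⟩
  map_add' _ _ := rfl
  map_smul' _ _ := rfl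

/-- The natural inclusion of the summand into the restricted module. -/
noncomputable def incl (hi : i.1 ≤ n - 1) (z : ℤ) : Fz n m k i z ⟶ G n m hn hm k hz i where
  app p := ModuleCat.ofHom (inclMap n m hn hm k i hi z p)
  naturality p q f := by
    ext x
    refine Subtype.ext ?_
    show (if q ∈ Iz n m i z then (x.1 : k) else 0) =
      (if zeta n m hn hm q ∈ {w : Bipath n m | w ≤ i} then (x.1 : k) else 0)
    by_cases hq : q ∈ Iz n m i z
    · simp [hq, mem_imp n m hn hm i hi z hq]
    · by_cases hq2 : zeta n m hn hm q ∈ {w : Bipath n m | w ≤ i}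
      · have hp : p ∉ Iz n m i z := fun hp => hq (mem_step n m hn hm i hi f.le hp hq2)
        simp [hq, hq2, x.2 hp]
      · simp [hq, hq2]

noncomputable def inclHom (hi : i.1 ≤ n - 1) (z : ℤ) (p : ZZ) :
    (Fz n m k i z).obj p ⟶ (G n m hn hm k hz i).obj p :=
  ModuleCat.ofHom (inclMap n m hn hm k i hi z p)

noncomputable def backHom (z : ℤ) (p : ZZ) (hmem : p ∈ Iz n m i z) :
    (G n m hn hm k hz i).obj p ⟶ (Fz n m k i z).obj p :=
  ModuleCat.ofHom (backMap n m hn hm k i z p hmem)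

noncomputable def theCofan (hi : i.1 ≤ n - 1) : Cofan (Fz n m k i) :=
  Cofan.mk (G n m hn hm k hz i) (fun z => incl n m hn hm k hz i hi z)

noncomputable def descMap (hi : i.1 ≤ n - 1) (p : ZZ)
    (s : Cocone (Discrete.functor (Fz n m k i) ⋙ (evaluation ZZ (ModuleCat k)).obj p)) :
    (G n m hn hm k hz i).obj p ⟶ s.pt :=
  if h : ∃ z : ℤ, p ∈ Iz n m i z then
    backHom n m hn hm k hz i h.choose p h.choose_spec ≫ s.ι.app ⟨h.choose⟩
  else 0

lemma incl_back (hi : i.1 ≤ n - 1) (z : ℤ) (p : ZZ) (hmem : p ∈ Iz n m i z) :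
    inclHom n m hn hm k hz i hi z p ≫ backHom n m hn hm k hz i z p hmem =
      𝟙 ((Fz n m k i z).obj p) := by
  ext x
  rfl

noncomputable def pointwise (hi : i.1 ≤ n - 1) (p : ZZ) :
    IsColimit (((evaluation ZZ (ModuleCat k)).obj p).mapCocone
      (theCofan n m hn hm k hz i hi)) where
  desc s := descMap n m hn hm k hz i hi p s
  fac s j := by
    obtain ⟨z⟩ := j
    show inclHom n m hn hm k hz i hi z p ≫
        descMap n m hn hm k hz i hi p s = s.ι.app ⟨z⟩
    by_cases h : ∃ w : ℤ, p ∈ Iz n m i w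
    · by_cases hpz : p ∈ Iz n m i z
      · have hzz : z = h.choose := mem_unique n m hn hm i hi hpz h.choose_spec
        subst hzz
        rw [descMap, dif_pos h, ← Category.assoc, incl_back n m hn hm k hz i hi,
          Category.id_comp]
      · ext x
        have hx : x = 0 := Subtype.ext (x.2 hpz)
        rw [hx]
        simp only [map_zero]
    · have hpz : p ∉ Iz n m i z := fun hp => h ⟨z, hp⟩
      ext x
      have hx : x = 0 := Subtype.ext (x.2 hpz)
      rw [hx]
      simp only [map_zero]
  uniq s f hf := by
    ext x
    by_cases h : ∃ w : ℤ, p ∈ Iz n m i w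
    · have hx : (inclHom n m hn hm k hz i hi h.choose p)
          ((backHom n m hn hm k hz i h.choose p h.choose_spec) x) = x := rfl
      have h2 := hf ⟨h.choose⟩
      calc f x = f ((inclHom n m hn hm k hz i hi h.choose p)
            ((backHom n m hn hm k hz i h.choose p h.choose_spec) x)) := by rw [hx]
        _ = (s.ι.app ⟨h.choose⟩) ((backHom n m hn hm k hz i h.choose p h.choose_spec) x) := by
            rw [← h2]; rfl
        _ = descMap n m hn hm k hz i hi p s x := by rw [descMap, dif_pos h]; rfl
    · have hnle : zeta n m hn hm p ∉ {w : Bipath n m | w ≤ i} := fun hle =>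
        h (Exists.imp (fun z hz => mem_zzIoo.2 hz) ((zeta_le_iff n m hn hm i hi p).1 hle))
      have hx : x = 0 := Subtype.ext ((x : (G n m hn hm k hz i).obj p).2 hnle)
      rw [hx]
      simp only [map_zero]

end Main

end RestAux

/-- Restriction of the left-interval module `k[i,0]◁` along the covering map
decomposes as `⊕_(k ∈ ℤ) k(kN, kN+i+1)_ZZ`. -/
theorem restrict_left_interval_j_zero (n m : ℕ) (hn : 1 < n) (hm : 1 < m)
    (k : Type) [Field k] (hz : Monotone (zeta n m hn hm))
    (i : Bipath n m) (hi : i.1 ≤ n - 1) :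
    Nonempty ((restrictAlong k hz).obj
        (intervalModule k {z | z ≤ i} (isConvex_lower i)) ≅
      ∐ fun z : ℤ =>
        intervalModule k (zzIoo (z * ((n:ℤ)+m-1)) (z * ((n:ℤ)+m-1) + i.1 + 1)) (zzIoo_convex _ _)) := by
  have hc : IsColimit (RestAux.theCofan n m hn hm k hz i hi) :=
    evaluationJointlyReflectsColimits _ (fun p => RestAux.pointwise n m hn hm k hz i hi p)
  exact ⟨hc.coconePointUniqueUpToIso (colimit.isColimit _)⟩
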